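/- Define ψ(t|W,p) = log ∑_x p(x) Tr[W_x^{1+t} W_p^{-t}] with W_p = ∑_x p(x)W_x, and φ(s|W,p) = log Tr[(∑_x p(x) W_x^{1/(1-s)})^{1-s}]. Then for all t ≥ 0, ψ(t|W,p) ≥ (1+t)·φ(t/(1+t)|W,p). -/

import Mathlib

open Matrix
open scoped ComplexOrder Kronecker

noncomputable def mpow {n : Type*} [Fintype n] [DecidableEq n]
    (A : Matrix n n ℂ) (s : ℝ) : Matrix n n ℂ :=
  cfc (fun x : ℝ => x ^ s) A

noncomputable def mlog {n : Type*} [Fintype n] [DecidableEq n]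
    (A : Matrix n n ℂ) : Matrix n n ℂ :=
  cfc Real.log A

namespace PsiGePhiAux

variable {n : Type*} [Fintype n] [DecidableEq n]

lemma trace_cfc' (A : Matrix n n ℂ) (hA : A.IsHermitian) (f : ℝ → ℝ) :
    trace (cfc f A) = ((∑ i, f (hA.eigenvalues i) : ℝ) : ℂ) := by
  rw [hA.cfc_eq, Matrix.IsHermitian.cfc, Unitary.conjStarAlgAut_apply, trace_mul_cycle,
    (Matrix.mem_unitaryGroup_iff').mp (IsHermitian.eigenvectorUnitary hA).2, one_mul,
    trace_diagonal]
  push_cast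
  rfl

lemma trace_cfc_mul_cfc (A B : Matrix n n ℂ) (hA : A.IsHermitian) (hB : B.IsHermitian)
    (f g : ℝ → ℝ) :
    trace (cfc f A * cfc g B) =
      ((∑ i, ∑ j,
          ‖(star (IsHermitian.eigenvectorUnitary hA : Matrix n n ℂ) *
              (IsHermitian.eigenvectorUnitary hB : Matrix n n ℂ)) i j‖ ^ 2 *
            (f (hA.eigenvalues i) * g (hB.eigenvalues j)) : ℝ) : ℂ) := by
  set U : Matrix n n ℂ := (IsHermitian.eigenvectorUnitary hA : Matrix n n ℂ) with hU
  set V : Matrix n n ℂ := (IsHermitian.eigenvectorUnitary hB : Matrix n n ℂ) with hV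
  set M : Matrix n n ℂ := star U * V with hM
  set Df : Matrix n n ℂ := diagonal (RCLike.ofReal ∘ f ∘ hA.eigenvalues) with hDf
  set Dg : Matrix n n ℂ := diagonal (RCLike.ofReal ∘ g ∘ hB.eigenvalues) with hDg
  have hsM : star M = star V * U := by rw [hM, StarMul.star_mul, star_star]
  have key : trace (cfc f A * cfc g B) = trace (Df * M * Dg * star M) := by
    rw [hA.cfc_eq, hB.cfc_eq, Matrix.IsHermitian.cfc, Matrix.IsHermitian.cfc,
      Unitary.conjStarAlgAut_apply, Unitary.conjStarAlgAut_apply, ← hU, ← hV,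
      ← hDf, ← hDg]
    calc trace (U * Df * star U * (V * Dg * star V))
        = trace (U * (Df * (star U * (V * (Dg * star V))))) := by simp only [mul_assoc]
      _ = trace ((Df * (star U * (V * (Dg * star V)))) * U) := trace_mul_comm _ _
      _ = trace (Df * M * Dg * star M) := by rw [hsM, hM]; simp only [mul_assoc]
  rw [key]
  have tr_entry : ∀ i, (Df * M * Dg * star M) i i
      = ∑ j, ((‖M i j‖^2 * (f (hA.eigenvalues i) * g (hB.eigenvalues j)) : ℝ) : ℂ) := by
    intro i
    rw [Matrix.mul_apply]
    refine Finset.sum_congr rfl fun j _ => ?_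
    rw [Matrix.mul_diagonal, Matrix.diagonal_mul, Matrix.star_apply]
    have h1 : (M i j) * star (M i j) = ((‖M i j‖^2 : ℝ) : ℂ) := by
      rw [RCLike.star_def, Complex.mul_conj, Complex.normSq_eq_norm_sq]
    simp only [Function.comp_apply]
    calc (f (hA.eigenvalues i) : ℂ) * M i j * (g (hB.eigenvalues j) : ℂ) * star (M i j)
        = (M i j * star (M i j)) * ((f (hA.eigenvalues i) : ℂ) * (g (hB.eigenvalues j))) := by
          ring
      _ = _ := by rw [h1]; push_cast; ring
  rw [Matrix.trace]
  push_cast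
  refine Finset.sum_congr rfl fun i _ => ?_
  rw [Matrix.diag_apply, tr_entry i]
  push_cast
  rfl

lemma amgm_aux {α : ℝ} (hα0 : 0 < α) (hα1 : α < 1) {a μ : ℝ} (ha : 0 ≤ a) (hμ : 0 < μ) :
    a ^ α ≤ α * (μ * a) + (1 - α) * μ ^ (α / (α - 1)) := by
  have h := Real.geom_mean_le_arith_mean2_weighted (w₁ := α) (w₂ := 1 - α) (p₁ := μ * a)
    (p₂ := μ ^ (α / (α - 1))) hα0.le (by linarith) (mul_nonneg hμ.le ha)
    (Real.rpow_nonneg hμ.le _) (by ring)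
  have hne : α - 1 ≠ 0 := by intro h'; linarith [sub_eq_zero.mp h']
  have hid : (μ * a) ^ α * (μ ^ (α / (α - 1))) ^ (1 - α) = a ^ α := by
    have hγ1 : (μ ^ (α / (α - 1))) ^ (1 - α) = μ ^ (-α) := by
      rw [← Real.rpow_mul hμ.le]
      congr 1
      field_simp
      ring
    rw [Real.mul_rpow hμ.le ha, hγ1,
      show μ ^ α * a ^ α * μ ^ (-α) = μ ^ α * μ ^ (-α) * a ^ α from by ring,
      ← Real.rpow_add hμ, add_neg_cancel, Real.rpow_zero, one_mul]
  calc a ^ α = (μ * a) ^ α * (μ ^ (α / (α - 1))) ^ (1 - α) := hid.symm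
    _ ≤ α * (μ * a) + (1 - α) * μ ^ (α / (α - 1)) := h

lemma scalar_core {ι κ : Type*} [Fintype ι] [Fintype κ] (a : ι → ℝ) (s : κ → ℝ) (c : ι → κ → ℝ)
    (ha : ∀ i, 0 ≤ a i) (hs : ∀ j, 0 < s j) (hc : ∀ i j, 0 ≤ c i j)
    (hrow : ∀ i, ∑ j, c i j = 1) (hcol : ∀ j, ∑ i, c i j = 1) (hs1 : ∑ j, s j = 1)
    {t : ℝ} (ht : 0 ≤ t) :
    ∑ i, (a i) ^ (1 / (1 + t) : ℝ) ≤ (∑ i, ∑ j, c i j * (a i * s j ^ (-t))) ^ (1 / (1 + t) : ℝ) := by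
  have h1t : (0:ℝ) < 1 + t := by linarith
  set α : ℝ := 1 / (1 + t) with hαdef
  have hα0 : 0 < α := by positivity
  set S : ℝ := ∑ i, ∑ j, c i j * (a i * s j ^ (-t)) with hSdef
  have hS0 : 0 ≤ S := by
    refine Finset.sum_nonneg fun i _ => Finset.sum_nonneg fun j _ => ?_
    exact mul_nonneg (hc i j) (mul_nonneg (ha i) (Real.rpow_nonneg (hs j).le _))
  rcases eq_or_lt_of_le ht with rfl | htpos
  · have hα : α = 1 := by simp [hαdef]
    have hSe : S = ∑ i, a i := by
      rw [hSdef]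
      refine Finset.sum_congr rfl fun i _ => ?_
      have : ∀ j, c i j * (a i * s j ^ (-(0:ℝ))) = c i j * a i := by
        intro j; rw [neg_zero, Real.rpow_zero, mul_one]
      rw [Finset.sum_congr rfl (fun j _ => this j), ← Finset.sum_mul, hrow, one_mul]
    rw [hα, hSe, Real.rpow_one]
    refine le_of_eq (Finset.sum_congr rfl fun i _ => ?_)
    exact Real.rpow_one _
  · have hα1 : α < 1 := by
      rw [hαdef, div_lt_one h1t]; linarith
    have hγ : α / (α - 1) = -(1 / t) := by
      rw [hαdef]; field_simp
      rw [show (1:ℝ) - (1+t) = -t by ring, div_neg, div_self htpos.ne']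
    rcases eq_or_lt_of_le hS0 with hS | hS
    · have hzero : ∀ i, a i = 0 := by
        intro i
        have hall : ∀ x ∈ Finset.univ, ∀ y ∈ Finset.univ, c x y * (a x * s y ^ (-t)) = 0 := by
          have := (Finset.sum_eq_zero_iff_of_nonneg (fun i _ =>
            Finset.sum_nonneg fun j _ => mul_nonneg (hc i j)
              (mul_nonneg (ha i) (Real.rpow_nonneg (hs j).le _)))).mp hS.symm
          intro x hx y hy
          exact (Finset.sum_eq_zero_iff_of_nonneg (fun j _ => mul_nonneg (hc x j)
            (mul_nonneg (ha x) (Real.rpow_nonneg (hs j).le _)))).mp (this x hx) y hy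
        by_contra hne
        have hapos : 0 < a i := lt_of_le_of_ne (ha i) (Ne.symm hne)
        obtain ⟨j, hj⟩ : ∃ j, c i j ≠ 0 := by
          by_contra hno
          push_neg at hno
          have : (1:ℝ) = 0 := by rw [← hrow i, Finset.sum_eq_zero fun j _ => hno j]
          norm_num at this
        have := hall i (Finset.mem_univ i) j (Finset.mem_univ j)
        have hpos : 0 < c i j * (a i * s j ^ (-t)) :=
          mul_pos (lt_of_le_of_ne (hc i j) (Ne.symm hj))
            (mul_pos hapos (Real.rpow_pos_of_pos (hs j) _))
        linarith
      rw [← hS]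
      have : ∀ i ∈ Finset.univ, (a i) ^ α = (0:ℝ) := fun i _ => by
        rw [hzero i, Real.zero_rpow hα0.ne']
      rw [Finset.sum_congr rfl this, Finset.sum_const, smul_zero, Real.zero_rpow hα0.ne']
    · set lam : ℝ := S ^ (α - 1) with hlam
      have hlampos : 0 < lam := Real.rpow_pos_of_pos hS _
      have hlamS : α * lam * S + (1 - α) * S ^ α = S ^ α := by
        have : lam * S = S ^ α := by
          rw [hlam]
          calc S ^ (α - 1) * S = S ^ (α - 1) * S ^ (1:ℝ) := by rw [Real.rpow_one]
            _ = S ^ (α - 1 + 1) := (Real.rpow_add hS _ _).symm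
            _ = S ^ α := by ring_nf
        rw [mul_assoc, this]; ring
      have perterm : ∀ i j, (a i) ^ α ≤ α * lam * (a i * s j ^ (-t)) + (1 - α) * S ^ α * s j := by
        intro i j
        have hμ : 0 < lam * s j ^ (-t) := mul_pos hlampos (Real.rpow_pos_of_pos (hs j) _)
        have h := amgm_aux hα0 hα1 (ha i) hμ
        have hpow : (lam * s j ^ (-t)) ^ (α / (α - 1)) = S ^ α * s j := by
          rw [Real.mul_rpow hlampos.le (Real.rpow_nonneg (hs j).le _), hlam,
            ← Real.rpow_mul hS.le, ← Real.rpow_mul (hs j).le, hγ]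
          have e1 : (α - 1) * -(1 / t) = α := by
            rw [hαdef]; field_simp; ring
          have e2 : -t * -(1 / t) = 1 := by field_simp
          rw [e1, e2, Real.rpow_one]
        calc (a i) ^ α
            ≤ α * (lam * s j ^ (-t) * a i) + (1 - α) * (lam * s j ^ (-t)) ^ (α / (α - 1)) := h
          _ = α * lam * (a i * s j ^ (-t)) + (1 - α) * S ^ α * s j := by rw [hpow]; ring
      calc ∑ i, (a i) ^ α
          = ∑ i, ∑ j, c i j * (a i) ^ α := by
            refine Finset.sum_congr rfl fun i _ => ?_
            rw [← Finset.sum_mul, hrow, one_mul]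
        _ ≤ ∑ i, ∑ j, c i j * (α * lam * (a i * s j ^ (-t)) + (1 - α) * S ^ α * s j) := by
            refine Finset.sum_le_sum fun i _ => Finset.sum_le_sum fun j _ => ?_
            exact mul_le_mul_of_nonneg_left (perterm i j) (hc i j)
        _ = α * lam * S + (1 - α) * S ^ α * ∑ j, s j := by
            simp_rw [mul_add, Finset.sum_add_distrib]
            congr 1
            · rw [hSdef, Finset.mul_sum]
              refine Finset.sum_congr rfl fun i _ => ?_
              rw [Finset.mul_sum]
              refine Finset.sum_congr rfl fun j _ => ?_
              ring
            · rw [Finset.sum_comm, Finset.mul_sum]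
              refine Finset.sum_congr rfl fun j _ => ?_
              rw [← Finset.sum_mul, hcol, one_mul]
        _ = S ^ α := by rw [hs1, mul_one, hlamS]

lemma mpow_posSemidef {A : Matrix n n ℂ} (hA : A.PosSemidef) (r : ℝ) :
    (mpow A r).PosSemidef := by
  rw [mpow, hA.1.cfc_eq, Matrix.IsHermitian.cfc]
  have hdiag : (diagonal (RCLike.ofReal ∘ (fun x : ℝ => x ^ r) ∘ hA.1.eigenvalues) :
      Matrix n n ℂ).PosSemidef := by
    rw [posSemidef_diagonal_iff]
    intro i
    simp only [Function.comp_apply]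
    rw [RCLike.ofReal_nonneg]
    exact Real.rpow_nonneg (hA.eigenvalues_nonneg i) r
  have h2 := hdiag.mul_mul_conjTranspose_same
    (B := (IsHermitian.eigenvectorUnitary hA.1 : Matrix n n ℂ))
  simpa [Matrix.star_eq_conjTranspose] using h2

lemma smul_posSemidef {M : Matrix n n ℂ} (hM : M.PosSemidef) {r : ℝ} (hr : 0 ≤ r) :
    ((r : ℂ) • M).PosSemidef := by
  constructor
  · rw [IsHermitian, conjTranspose_smul, RCLike.star_def, Complex.conj_ofReal, hM.1.eq]
  · intro x
    convert mul_nonneg (show (0:ℂ) ≤ (r:ℂ) by exact_mod_cast hr) (hM.2 x) using 1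
    simp only [Matrix.smul_apply, smul_eq_mul, Finsupp.mul_sum]
    exact Finsupp.sum_congr fun i _ => Finsupp.sum_congr fun j _ => by ring

lemma key_ineq {A σ : Matrix n n ℂ} (hA : A.PosSemidef) (hσ : σ.PosDef) (hσtr : σ.trace = 1)
    {t : ℝ} (ht : 0 ≤ t) :
    0 ≤ (trace (A * mpow σ (-t))).re ∧
    (trace (mpow A (1 / (1 + t)))).re
      ≤ ((trace (A * mpow σ (-t))).re) ^ ((1:ℝ) / (1 + t)) := by
  have hAh : A.IsHermitian := hA.1
  have hσh : σ.IsHermitian := hσ.1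
  have hAsa : IsSelfAdjoint A := hAh
  set U : Matrix n n ℂ := (IsHermitian.eigenvectorUnitary hAh : Matrix n n ℂ) with hU
  set V : Matrix n n ℂ := (IsHermitian.eigenvectorUnitary hσh : Matrix n n ℂ) with hV
  have hU1 : U * star U = 1 := (Matrix.mem_unitaryGroup_iff).mp (IsHermitian.eigenvectorUnitary hAh).2
  have hU2 : star U * U = 1 := (Matrix.mem_unitaryGroup_iff').mp (IsHermitian.eigenvectorUnitary hAh).2
  have hV1 : V * star V = 1 := (Matrix.mem_unitaryGroup_iff).mp (IsHermitian.eigenvectorUnitary hσh).2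
  have hV2 : star V * V = 1 := (Matrix.mem_unitaryGroup_iff').mp (IsHermitian.eigenvectorUnitary hσh).2
  set M : Matrix n n ℂ := star U * V with hM
  have hsM : star M = star V * U := by rw [hM, StarMul.star_mul, star_star]
  have hM1 : M * star M = 1 := by
    rw [hsM, hM, mul_assoc]
    rw [show V * (star V * U) = U from by rw [← mul_assoc, hV1, one_mul], hU2]
  have hM2 : star M * M = 1 := by
    rw [hsM, hM, mul_assoc]
    rw [show U * (star U * V) = V from by rw [← mul_assoc, hU1, one_mul], hV2]
  have hentry : ∀ i j, M i j * star (M i j) = ((‖M i j‖^2 : ℝ) : ℂ) := by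
    intro i j
    rw [RCLike.star_def, Complex.mul_conj, Complex.normSq_eq_norm_sq]
  have hrow : ∀ i, ∑ j, ‖M i j‖^2 = (1:ℝ) := by
    intro i
    have h2 : (M * star M) i i = 1 := by rw [hM1, Matrix.one_apply_eq]
    rw [Matrix.mul_apply] at h2
    have h3 : ∀ j ∈ Finset.univ, M i j * (star M) j i = ((‖M i j‖^2 : ℝ) : ℂ) := by
      intro j _; rw [Matrix.star_apply]; exact hentry i j
    rw [Finset.sum_congr rfl h3] at h2
    exact_mod_cast h2
  have hcol : ∀ j, ∑ i, ‖M i j‖^2 = (1:ℝ) := by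
    intro j
    have h2 : (star M * M) j j = 1 := by rw [hM2, Matrix.one_apply_eq]
    rw [Matrix.mul_apply] at h2
    have h3 : ∀ i ∈ Finset.univ, (star M) j i * M i j = ((‖M i j‖^2 : ℝ) : ℂ) := by
      intro i _; rw [Matrix.star_apply, mul_comm]; exact hentry i j
    rw [Finset.sum_congr rfl h3] at h2
    exact_mod_cast h2
  have hs1 : ∑ j, hσh.eigenvalues j = 1 := by
    have h := trace_cfc' σ hσh (fun x : ℝ => x)
    rw [cfc_id' ℝ σ, hσtr] at h
    exact_mod_cast h.symm
  have hT : trace (mpow A (1 / (1 + t)))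
      = ((∑ i, (hAh.eigenvalues i) ^ ((1:ℝ) / (1 + t)) : ℝ) : ℂ) := by
    rw [mpow, trace_cfc' A hAh]
  have hSf : trace (A * mpow σ (-t))
      = ((∑ i, ∑ j, ‖M i j‖^2 * ((hAh.eigenvalues i) * (hσh.eigenvalues j) ^ (-t)) : ℝ) : ℂ) := by
    conv_lhs => rw [← cfc_id' ℝ A]
    rw [mpow, trace_cfc_mul_cfc A σ hAh hσh]
  constructor
  · rw [hSf, Complex.ofReal_re]
    refine Finset.sum_nonneg fun i _ => Finset.sum_nonneg fun j _ => ?_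
    refine mul_nonneg (by positivity) (mul_nonneg (hA.eigenvalues_nonneg i) ?_)
    exact Real.rpow_nonneg (hσ.eigenvalues_pos j).le _
  · rw [hT, hSf, Complex.ofReal_re, Complex.ofReal_re]
    exact scalar_core hAh.eigenvalues hσh.eigenvalues (fun i j => ‖M i j‖^2)
      hA.eigenvalues_nonneg hσ.eigenvalues_pos (fun i j => by positivity)
      hrow hcol hs1 ht

end PsiGePhiAux

open PsiGePhiAux in
/-- `ψ(t|W,p) ≥ (1+t) φ(t/(1+t)|W,p)` for `t ≥ 0`, where
`ψ(t|W,p) = log ∑ x p(x) Tr[W_x^{1+t} W_p^{-t}]` and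
`φ(s|W,p) = log Tr[(∑_x p(x) W_x^{1/(1-s)})^{1-s}]`. -/
theorem psi_ge_phi {X : Type*} [Fintype X] {d : ℕ}
    (W : X → Matrix (Fin d) (Fin d) ℂ) (p : X → ℝ) (t : ℝ) (ht : 0 ≤ t)
    (hW : ∀ x, (W x).PosSemidef) (hWtr : ∀ x, Matrix.trace (W x) = 1)
    (hp : ∀ x, 0 ≤ p x) (hp1 : ∑ x, p x = 1)
    (hWp : (∑ x, (p x : ℂ) • W x).PosDef) :
    Real.log (∑ x, p x *
        (Matrix.trace (mpow (W x) (1+t) * mpow (∑ x, (p x : ℂ) • W x) (-t))).re)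
      ≥ (1+t) * Real.log ((Matrix.trace
          (mpow (∑ x, (p x : ℂ) • mpow (W x) (1/(1 - t/(1+t)))) (1 - t/(1+t)))).re) := by
  classical
  have h1t : (0:ℝ) < 1 + t := by linarith
  have e2 : 1/(1 - t/(1+t)) = 1 + t := by
    rw [show 1 - t/(1+t) = 1/(1+t) from by field_simp; ring, one_div_one_div]
  have e1 : 1 - t/(1+t) = 1/(1+t) := by field_simp; ring
  rw [e2, e1]
  set σ : Matrix (Fin d) (Fin d) ℂ := ∑ x, (p x : ℂ) • W x with hσdef
  set A : Matrix (Fin d) (Fin d) ℂ := ∑ x, (p x : ℂ) • mpow (W x) (1+t) with hAdef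
  have hσtr : σ.trace = 1 := by
    rw [hσdef, trace_sum]
    simp only [trace_smul, hWtr, smul_eq_mul, mul_one]
    rw [show (∑ x, (p x : ℂ)) = ((∑ x, p x : ℝ) : ℂ) from by push_cast; rfl, hp1]
    norm_num
  have hApsd : A.PosSemidef := by
    rw [hAdef]
    refine Finset.sum_induction _ _ (fun a b ha hb => ha.add hb) Matrix.PosSemidef.zero ?_
    exact fun x _ => smul_posSemidef (mpow_posSemidef (hW x) _) (hp x)
  have hLHS : (∑ x, p x * (trace (mpow (W x) (1+t) * mpow σ (-t))).re)
      = (trace (A * mpow σ (-t))).re := by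
    have hdist : A * mpow σ (-t) = ∑ x, (p x : ℂ) • (mpow (W x) (1+t) * mpow σ (-t)) := by
      rw [hAdef, Finset.sum_mul]
      exact Finset.sum_congr rfl fun x _ => smul_mul_assoc _ _ _
    rw [hdist, trace_sum, Complex.re_sum]
    refine Finset.sum_congr rfl fun x _ => ?_
    rw [trace_smul, smul_eq_mul, Complex.mul_re, Complex.ofReal_re, Complex.ofReal_im,
      zero_mul, sub_zero]
  rw [hLHS]
  obtain ⟨hS0, hkey⟩ := key_ineq hApsd hWp hσtr ht
  set S : ℝ := (trace (A * mpow σ (-t))).re with hSdef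
  set T : ℝ := (trace (mpow A (1/(1+t)))).re with hTdef
  -- T > 0
  have hT_eq : T = ∑ i, (hApsd.1.eigenvalues i) ^ ((1:ℝ)/(1+t)) := by
    rw [hTdef, mpow, trace_cfc' A hApsd.1, Complex.ofReal_re]
  have htrA : (0:ℝ) < (trace A).re := by
    have hA_tr : (trace A).re = ∑ x, p x * (∑ k, ((hW x).1.eigenvalues k) ^ (1+t)) := by
      rw [hAdef, trace_sum, Complex.re_sum]
      refine Finset.sum_congr rfl fun x _ => ?_
      rw [trace_smul, smul_eq_mul, mpow, trace_cfc' (W x) (hW x).1, Complex.mul_re,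
        Complex.ofReal_re, Complex.ofReal_im, Complex.ofReal_im, zero_mul, sub_zero,
        Complex.ofReal_re]
    rw [hA_tr]
    obtain ⟨x0, hx0⟩ : ∃ x, p x ≠ 0 := by
      by_contra hno
      push_neg at hno
      rw [Finset.sum_eq_zero (fun x _ => hno x)] at hp1
      norm_num at hp1
    have hx0pos : 0 < p x0 := lt_of_le_of_ne (hp x0) (Ne.symm hx0)
    have hWsum : ∑ k, (hW x0).1.eigenvalues k = 1 := by
      have h := trace_cfc' (W x0) (hW x0).1 (fun x : ℝ => x)
      rw [cfc_id' ℝ (W x0) (show _root_.IsSelfAdjoint (W x0) from (hW x0).1), hWtr x0] at h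
      exact_mod_cast h.symm
    obtain ⟨k0, hk0⟩ : ∃ k, (hW x0).1.eigenvalues k ≠ 0 := by
      by_contra hno
      push_neg at hno
      rw [Finset.sum_eq_zero (fun k _ => hno k)] at hWsum
      norm_num at hWsum
    have hk0pos : 0 < (hW x0).1.eigenvalues k0 :=
      lt_of_le_of_ne ((hW x0).eigenvalues_nonneg k0) (Ne.symm hk0)
    refine Finset.sum_pos' (fun x _ => ?_) ⟨x0, Finset.mem_univ x0, ?_⟩
    · refine mul_nonneg (hp x) (Finset.sum_nonneg fun k _ => ?_)
      exact Real.rpow_nonneg ((hW x).eigenvalues_nonneg k) _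
    · refine mul_pos hx0pos ?_
      refine Finset.sum_pos' (fun k _ => Real.rpow_nonneg ((hW x0).eigenvalues_nonneg k) _)
        ⟨k0, Finset.mem_univ k0, Real.rpow_pos_of_pos hk0pos _⟩
  have hsumA : (trace A).re = ∑ i, hApsd.1.eigenvalues i := by
    have h := trace_cfc' A hApsd.1 (fun x : ℝ => x)
    rw [cfc_id' ℝ A (show _root_.IsSelfAdjoint A from hApsd.1)] at h
    rw [h, Complex.ofReal_re]
  have hTpos : 0 < T := by
    obtain ⟨i0, hi0⟩ : ∃ i, hApsd.1.eigenvalues i ≠ 0 := by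
      by_contra hno
      push_neg at hno
      rw [hsumA, Finset.sum_eq_zero (fun i _ => hno i)] at htrA
      norm_num at htrA
    have hi0pos : 0 < hApsd.1.eigenvalues i0 :=
      lt_of_le_of_ne (hApsd.eigenvalues_nonneg i0) (Ne.symm hi0)
    rw [hT_eq]
    refine Finset.sum_pos' (fun i _ => Real.rpow_nonneg (hApsd.eigenvalues_nonneg i) _)
      ⟨i0, Finset.mem_univ i0, Real.rpow_pos_of_pos hi0pos _⟩
  have hSpos : 0 < S := by
    rcases eq_or_lt_of_le hS0 with h | h
    · exfalso
      rw [← h, Real.zero_rpow (by positivity)] at hkey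
      linarith
    · exact h
  have hTS : T ^ (1+t) ≤ S := by
    have h := Real.rpow_le_rpow hTpos.le hkey h1t.le
    rwa [← Real.rpow_mul hSpos.le, one_div_mul_cancel h1t.ne', Real.rpow_one] at h
  have hfin : (1+t) * Real.log T ≤ Real.log S := by
    calc (1+t) * Real.log T = Real.log (T ^ (1+t)) := (Real.log_rpow hTpos _).symm
      _ ≤ Real.log S := Real.log_le_log (Real.rpow_pos_of_pos hTpos _) hTS
  exact hfin
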